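/- Let n ≥ 2 and a, b ∈ ℤ. In ℤⁿ with standard basis e₁,…,eₙ, define the n + 3 column vectors: u₁ = e₁, u₂ = −e₁ − a·e₂, u₃ = −e₁ − b·e₂, w_j = e_{j+1} for j = 1,…,n−1, and w_n = −(e₂ + e₃ + ⋯ + eₙ). Then for every k ∈ {1,2,3} and every j ∈ {1,…,n}, the n×n integer matrix whose columns are u_k together with (w_l)_{l ≠ j} has determinant 1 or −1. (This verifies the paper's Proposition 4.6: the function λ on the facets of the polytope Q = H²×Δ^{n−1} with exceptional facets F₂, F₄, F₆, given by the displayed n×(n+3) matrix, is an isotropy function satisfying the smoothness condition of Sarkar's theorem — whenever facets F_{i₁},…,F_{i_r} of Q with assigned vectors have nonempty intersection, the vectors λ(F_{i₁}),…,λ(F_{i_r}) form part of a basis of ℤⁿ.) -/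

import Mathlib

open Finset

/-- The columns `u₁ = e₁`, `u₂ = −e₁ − a·e₂`, `u₃ = −e₁ − b·e₂` assigned to the
facets `F₁, F₃, F₅` of `Q = H² × Δ^{n−1}` (0-indexed entries). -/
def uCol (n : ℕ) (a b : ℤ) : Fin 3 → Fin n → ℤ := fun k p =>
  if (p : ℕ) = 0 then (if (k : ℕ) = 0 then 1 else -1)
  else if (p : ℕ) = 1 then (if (k : ℕ) = 0 then 0 else if (k : ℕ) = 1 then -a else -b)
  else 0

/-- The columns `w_j = e_{j+1}` for `j = 1,…,n−1` and `w_n = −(e₂ + ⋯ + eₙ)`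
assigned to the facets `F₇,…,F_{n+6}` (0-indexed: for `j + 1 < n`, `w_j` is the
standard basis vector with `1` at position `j + 1`; the last column has `−1` at
all positions `≥ 1`). -/
def wCol (n : ℕ) : Fin n → Fin n → ℤ := fun j p =>
  if (j : ℕ) + 1 < n then (if (p : ℕ) = (j : ℕ) + 1 then 1 else 0)
  else if 1 ≤ (p : ℕ) then -1 else 0

lemma det_pm_one_of_tri {n : ℕ} (M : Matrix (Fin n) (Fin n) ℤ) (ρ σ : Fin n ≃ Fin n)
    (h0 : ∀ p q : Fin n, p < q → M (ρ p) (σ q) = 0)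
    (h1 : ∀ i : Fin n, M (ρ i) (σ i) * M (ρ i) (σ i) = 1) :
    M.det = 1 ∨ M.det = -1 := by
  set A := M.submatrix ρ σ with hAdef
  have htri : A.BlockTriangular OrderDual.toDual := by
    intro i j hij
    exact h0 i j hij
  have hA : A.det * A.det = 1 := by
    rw [Matrix.det_of_lowerTriangular A htri, ← Finset.prod_mul_distrib]
    exact Finset.prod_eq_one fun i _ => h1 i
  have hAe : A = (M.submatrix ρ ρ).submatrix id (σ.trans ρ.symm) := by
    ext p q; simp [hAdef, Matrix.submatrix_apply, Equiv.apply_symm_apply]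
  have hsign : A.det = ((Equiv.Perm.sign (σ.trans ρ.symm)) : ℤ) * M.det := by
    rw [hAe, Matrix.det_permute', Matrix.det_submatrix_equiv_self]; norm_cast
  have hdd : M.det * M.det = 1 := by
    have hs : ((Equiv.Perm.sign (σ.trans ρ.symm)) : ℤ) *
        ((Equiv.Perm.sign (σ.trans ρ.symm)) : ℤ) = 1 := by
      rcases Int.units_eq_one_or (Equiv.Perm.sign (σ.trans ρ.symm)) with h | h <;> simp [h]
    have := hA
    rw [hsign] at this
    nlinarith [this, hs]
  exact Int.isUnit_iff.mp (IsUnit.of_mul_eq_one _ hdd)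

set_option maxHeartbeats 2000000 in
/-- for `n ≥ 2`, `a, b ∈ ℤ`, every `k ∈ {1,2,3}` and `j ∈ {1,…,n}`,
the `n×n` integer matrix whose columns are `u_k` together with `(w_l)_{l ≠ j}` has
determinant `1` or `−1`; this verifies Proposition 4.6: `λ` is an isotropy function
on `⟨Q ∖ F₂, F₄, F₆⟩` satisfying the smoothness condition of Sarkar's theorem. -/
theorem isotropy_function_det (n : ℕ) (hn : 2 ≤ n) (a b : ℤ)
    (k : Fin 3) (j : Fin n) :
    (Matrix.of fun p q : Fin n =>
        if q = j then uCol n a b k p else wCol n q p).det = 1 ∨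
    (Matrix.of fun p q : Fin n =>
        if q = j then uCol n a b k p else wCol n q p).det = -1 := by
  have hjn : (j : ℕ) < n := j.isLt
  rcases Nat.lt_or_ge ((j : ℕ) + 1) n with hj | hj
  · -- case j + 1 < n
    set J := (j : ℕ) with hJ
    have hρval : ∀ i : ℕ, i < n →
        (if i = 0 then 0 else if i = 1 then J + 1 else if i ≤ J + 1 then i - 1 else i) < n := by
      intro i hi; split_ifs <;> first | omega | exact ‹False›.elim
    have hσval : ∀ i : ℕ, i < n →
        (if i = 0 then J else if i = 1 then n - 1 else if i ≤ J + 1 then i - 2 else i - 1) < n := by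
      intro i hi; split_ifs <;> first | omega | exact ‹False›.elim
    set ρf : Fin n → Fin n := fun i =>
      ⟨if (i : ℕ) = 0 then 0 else if (i : ℕ) = 1 then J + 1
        else if (i : ℕ) ≤ J + 1 then (i : ℕ) - 1 else (i : ℕ), hρval i i.isLt⟩ with hρf
    set σf : Fin n → Fin n := fun i =>
      ⟨if (i : ℕ) = 0 then J else if (i : ℕ) = 1 then n - 1
        else if (i : ℕ) ≤ J + 1 then (i : ℕ) - 2 else (i : ℕ) - 1, hσval i i.isLt⟩ with hσf
    have hρinj : Function.Injective ρf := by
      intro x y hxy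
      have hx := x.isLt; have hy := y.isLt
      rw [hρf, Fin.ext_iff] at hxy
      simp only [] at hxy
      rw [Fin.ext_iff]
      split_ifs at hxy <;> omega
    have hσinj : Function.Injective σf := by
      intro x y hxy
      have hx := x.isLt; have hy := y.isLt
      rw [hσf, Fin.ext_iff] at hxy
      simp only [] at hxy
      rw [Fin.ext_iff]
      split_ifs at hxy <;> omega
    set ρ : Fin n ≃ Fin n := Equiv.ofBijective ρf (Finite.injective_iff_bijective.mp hρinj)
    set σ : Fin n ≃ Fin n := Equiv.ofBijective σf (Finite.injective_iff_bijective.mp hσinj)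
    apply det_pm_one_of_tri _ ρ σ
    · intro p q hpq
      have hp := p.isLt; have hq := q.isLt
      have hpq' : (p : ℕ) < (q : ℕ) := hpq
      simp only [ρ, σ, Equiv.ofBijective_apply, hρf, hσf, Matrix.of_apply, uCol, wCol,
        Fin.ext_iff]
      split_ifs <;> first | omega | exact ‹False›.elim
    · intro i
      have hi := i.isLt
      simp only [ρ, σ, Equiv.ofBijective_apply, hρf, hσf, Matrix.of_apply, uCol, wCol,
        Fin.ext_iff]
      have hk := k.isLt
      split_ifs <;> first | omega | exact ‹False›.elim
  · -- case j = n - 1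
    have hJ : (j : ℕ) = n - 1 := by omega
    have hσval : ∀ i : ℕ, i < n → (if i = 0 then n - 1 else i - 1) < n := by
      intro i hi; split_ifs <;> first | omega | exact ‹False›.elim
    set σf : Fin n → Fin n := fun i =>
      ⟨if (i : ℕ) = 0 then n - 1 else (i : ℕ) - 1, hσval i i.isLt⟩ with hσf
    have hσinj : Function.Injective σf := by
      intro x y hxy
      have hx := x.isLt; have hy := y.isLt
      rw [hσf, Fin.ext_iff] at hxy
      simp only [] at hxy
      rw [Fin.ext_iff]
      split_ifs at hxy <;> omega
    set σ : Fin n ≃ Fin n := Equiv.ofBijective σf (Finite.injective_iff_bijective.mp hσinj)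
    apply det_pm_one_of_tri _ (Equiv.refl _) σ
    · intro p q hpq
      have hp := p.isLt; have hq := q.isLt
      have hpq' : (p : ℕ) < (q : ℕ) := hpq
      simp only [σ, Equiv.ofBijective_apply, hσf, Equiv.refl_apply, Matrix.of_apply, uCol, wCol,
        Fin.ext_iff]
      split_ifs <;> first | omega | exact ‹False›.elim
    · intro i
      have hi := i.isLt
      have hk := k.isLt
      simp only [σ, Equiv.ofBijective_apply, hσf, Equiv.refl_apply, Matrix.of_apply, uCol, wCol,
        Fin.ext_iff]
      split_ifs <;> first | omega | exact ‹False›.elim
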